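/- Let A be an integer m×n matrix, l, u ∈ (ℤ ∪ {±∞})ⁿ, b ∈ ℤᵐ, and suppose the set S = {x ∈ ℤⁿ : Ax = b, l ≤ x ≤ u} is infinite. Then there exists g ∈ G(A) with gᵢ ≤ 0 whenever uᵢ < ∞ and gᵢ ≥ 0 whenever lᵢ > −∞. -/

import Mathlib

/-- The conformal partial order on ℤⁿ. -/
def IsConformal {n : ℕ} (x y : Fin n → ℤ) : Prop :=
  ∀ i, x i * y i ≥ 0 ∧ |x i| ≤ |y i|

/-- The Graver basis of an integer matrix. -/
def Graver {m n : ℕ} (A : Matrix (Fin m) (Fin n) ℤ) : Set (Fin n → ℤ) :=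
  {x | x ≠ 0 ∧ A.mulVec x = 0 ∧
    ∀ y : Fin n → ℤ, y ≠ 0 → A.mulVec y = 0 → IsConformal y x → y = x}

lemma int_eq_of_mul_nonneg_abs_eq {a b : ℤ} (h : a * b ≥ 0) (h2 : |a| = |b|) : a = b := by
  rcases abs_cases a with ⟨e1, s1⟩ | ⟨e1, s1⟩ <;> rcases abs_cases b with ⟨e2, s2⟩ | ⟨e2, s2⟩ <;>
    nlinarith

lemma isConformal_trans {n : ℕ} {a b c : Fin n → ℤ}
    (h1 : IsConformal a b) (h2 : IsConformal b c) : IsConformal a c := by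
  intro i
  obtain ⟨p1, q1⟩ := h1 i
  obtain ⟨p2, q2⟩ := h2 i
  refine ⟨?_, q1.trans q2⟩
  rcases eq_or_ne (b i) 0 with hb | hb
  · have : a i = 0 := by
      have := q1
      rw [hb] at this
      simpa [abs_nonpos_iff] using this
    simp [this]
  · have hb2 : 0 < b i * b i := mul_self_pos.mpr hb
    nlinarith [mul_nonneg p1 p2]

lemma exists_graver_conformal {m n : ℕ} (A : Matrix (Fin m) (Fin n) ℤ) (z : Fin n → ℤ)
    (hz : z ≠ 0) (hAz : A.mulVec z = 0) : ∃ g ∈ Graver A, IsConformal g z := by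
  set T : Set (Fin n → ℤ) := {y | y ≠ 0 ∧ A.mulVec y = 0 ∧ IsConformal y z} with hT
  have hzT : z ∈ T := ⟨hz, hAz, fun i => ⟨mul_self_nonneg _, le_rfl⟩⟩
  set μ : (Fin n → ℤ) → ℕ := fun y => ∑ i, (y i).natAbs with hμ
  have hne : (μ '' T).Nonempty := ⟨μ z, z, hzT, rfl⟩
  obtain ⟨g, hgT, hgμ⟩ := Nat.sInf_mem hne
  have hmin : ∀ y ∈ T, μ g ≤ μ y := fun y hy => hgμ ▸ Nat.sInf_le ⟨y, hy, rfl⟩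
  refine ⟨g, ⟨hgT.1, hgT.2.1, ?_⟩, hgT.2.2⟩
  intro y hy0 hAy hyg
  have hyT : y ∈ T := ⟨hy0, hAy, isConformal_trans hyg hgT.2.2⟩
  have habs : ∀ i, (y i).natAbs ≤ (g i).natAbs := by
    intro i
    have := (hyg i).2
    rw [Int.abs_eq_natAbs, Int.abs_eq_natAbs] at this
    exact_mod_cast this
  have hle : μ y ≤ μ g := Finset.sum_le_sum fun i _ => habs i
  have heq : μ y = μ g := le_antisymm hle (hmin y hyT)
  have hpt : ∀ i ∈ Finset.univ, (y i).natAbs = (g i).natAbs :=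
    (Finset.sum_eq_sum_iff_of_le fun i _ => habs i).mp heq
  funext i
  refine int_eq_of_mul_nonneg_abs_eq (hyg i).1 ?_
  rw [Int.abs_eq_natAbs, Int.abs_eq_natAbs]
  exact_mod_cast hpt i (Finset.mem_univ i)

/-- If the feasible set is infinite, then some Graver basis element is
compatible with the bounds. -/
theorem graver_recession_of_infinite (m n : ℕ)
    (A : Matrix (Fin m) (Fin n) ℤ) (b : Fin m → ℤ) (l u : Fin n → EReal)
    (hinf : {x : Fin n → ℤ | A.mulVec x = b ∧
        ∀ i, l i ≤ ((x i : ℝ) : EReal) ∧ ((x i : ℝ) : EReal) ≤ u i}.Infinite) :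
    ∃ g ∈ Graver A, (∀ i, u i < ⊤ → g i ≤ 0) ∧ (∀ i, ⊥ < l i → g i ≥ 0) := by
  set S := {x : Fin n → ℤ | A.mulVec x = b ∧
      ∀ i, l i ≤ ((x i : ℝ) : EReal) ∧ ((x i : ℝ) : EReal) ≤ u i} with hS
  -- lower/upper integer bounds on constrained coordinates
  have hlb : ∀ x ∈ S, ∀ i, ⊥ < l i → ⌈(l i).toReal⌉ ≤ x i := by
    intro x hx i hi
    have h1 : l i ≤ ((x i : ℝ) : EReal) := (hx.2 i).1
    have hne : l i ≠ ⊤ := (lt_of_le_of_lt h1 (EReal.coe_lt_top _)).ne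
    have h2 : (l i).toReal ≤ (x i : ℝ) := by
      have := EReal.toReal_le_toReal h1 hi.ne' (EReal.coe_ne_top _)
      simpa using this
    exact_mod_cast Int.ceil_le.mpr h2
  have hub : ∀ x ∈ S, ∀ i, u i < ⊤ → x i ≤ ⌊(u i).toReal⌋ := by
    intro x hx i hi
    have h1 : ((x i : ℝ) : EReal) ≤ u i := (hx.2 i).2
    have hne : u i ≠ ⊥ := (lt_of_lt_of_le (EReal.bot_lt_coe _) h1).ne'
    have h2 : (x i : ℝ) ≤ (u i).toReal := by
      have := EReal.toReal_le_toReal h1 (EReal.coe_ne_bot _) hi.ne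
      simpa using this
    exact_mod_cast Int.le_floor.mpr h2
  -- encode into ℕ-valued functions
  set e : (Fin n → ℤ) → ((Fin n ⊕ Fin n) → ℕ) := fun x =>
    Sum.elim (fun i => if ⊥ < l i then (x i - ⌈(l i).toReal⌉).toNat else 0)
      (fun i => if u i < ⊤ then (⌊(u i).toReal⌋ - x i).toNat else 0) with he
  obtain ⟨f⟩ : Nonempty (ℕ ↪ S) := ⟨hinf.natEmbedding⟩
  have hpwo : (Set.univ : Set ((Fin n ⊕ Fin n) → ℕ)).IsPWO :=
    Set.isPWO_of_wellQuasiOrderedLE _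
  obtain ⟨j, k, hjk, hle⟩ := hpwo (fun t => ⟨e ((f t : S) : Fin n → ℤ),
    Set.mem_univ _⟩)
  set x : Fin n → ℤ := ((f j : S) : Fin n → ℤ) with hxdef
  set y : Fin n → ℤ := ((f k : S) : Fin n → ℤ) with hydef
  have hxS : x ∈ S := (f j).2
  have hyS : y ∈ S := (f k).2
  have hxy : x ≠ y := by
    intro h
    exact absurd (Subtype.ext h : f j = f k) (f.injective.ne hjk.ne)
  set z : Fin n → ℤ := y - x with hz
  have hz0 : z ≠ 0 := sub_ne_zero.mpr (Ne.symm hxy)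
  have hAz : A.mulVec z = 0 := by
    rw [hz, Matrix.mulVec_sub, hxS.1, hyS.1, sub_self]
  have hzl : ∀ i, ⊥ < l i → 0 ≤ z i := by
    intro i hi
    have h1 := hle (Sum.inl i)
    simp only [he, Sum.elim_inl, if_pos hi] at h1
    have h2 := hlb x hxS i hi
    have h3 := hlb y hyS i hi
    simp only [hz, Pi.sub_apply]
    omega
  have hzu : ∀ i, u i < ⊤ → z i ≤ 0 := by
    intro i hi
    have h1 := hle (Sum.inr i)
    simp only [he, Sum.elim_inr, if_pos hi] at h1
    have h2 := hub x hxS i hi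
    have h3 := hub y hyS i hi
    simp only [hz, Pi.sub_apply]
    omega
  obtain ⟨g, hgG, hgz⟩ := exists_graver_conformal A z hz0 hAz
  refine ⟨g, hgG, ?_, ?_⟩
  · intro i hi
    have hzi := hzu i hi
    obtain ⟨hp, hq⟩ := hgz i
    rcases hzi.lt_or_eq with hlt | heq0
    · by_contra hgi
      push_neg at hgi
      exact absurd hp (not_le.mpr (mul_neg_of_pos_of_neg hgi hlt))
    · rw [heq0] at hq
      have : g i = 0 := by simpa [abs_nonpos_iff] using hq
      exact this.le
  · intro i hi
    have hzi := hzl i hi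
    obtain ⟨hp, hq⟩ := hgz i
    rcases hzi.lt_or_eq with hlt | heq0
    · by_contra hgi
      push_neg at hgi
      exact absurd hp (not_le.mpr (mul_neg_of_neg_of_pos hgi hlt))
    · rw [← heq0] at hq
      have : g i = 0 := by simpa [abs_nonpos_iff] using hq
      exact this.ge
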